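/- Second-order bias of the oracle estimator (deterministic conclusion of the paper's lemma for the treatment-specific mean): let H be a version of E[A | σ(Q_T)] and H* a version of E[A | σ(Q_T, Q₀)], and assume H ≥ δ, H* ≥ δ, and G₀ ≥ δ P-a.s.; moreover suppose there is a jointly measurable g : ℝ × ℝ → ℝ with H* = g(Q_T, Q₀) P-a.s. and |g(x, y) − g(x, y′)| ≤ C·|y − y′| for all x, y, y′ ∈ ℝ. Then |Ψ(Q_T) − Ψ(Q₀)| ≤ C·δ^{−2}·E[(Q_T − Q₀)²]; that is, the bias of the oracle-ensemble plug-in is bounded by a constant times the squared L²(P) distance between the oracle ensemble and the true regression. -/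

import Mathlib

open MeasureTheory

/-- Second-order bias of the oracle estimator (deterministic conclusion of the paper's
lemma for the treatment-specific mean): under the positivity and Lipschitz-coarsening
conditions, `|Ψ(Q_T) − Ψ(Q₀)| ≤ C δ⁻² E[(Q_T − Q₀)²]`. -/
theorem stmt_16
    {Ω 𝒲 : Type*} [MeasurableSpace Ω] [MeasurableSpace 𝒲]
    (P : Measure Ω) [IsProbabilityMeasure P]
    (W : Ω → 𝒲) (A Y G₀ Q₀ : Ω → ℝ)
    (hW : Measurable W) (hA : Measurable A) (hY : Measurable Y)
    (hAbin : ∀ ω, A ω = 0 ∨ A ω = 1)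
    (hYrange : ∀ ω, Y ω ∈ Set.Icc (0:ℝ) 1)
    (hG₀ : G₀ =ᵐ[P] P[A|MeasurableSpace.comap W inferInstance])
    (δ : ℝ) (hδ : δ ∈ Set.Ioo (0:ℝ) 1)
    (hpos : ∀ᵐ ω ∂P, δ ≤ G₀ ω)
    (hQ₀meas : Measurable[MeasurableSpace.comap W inferInstance] Q₀)
    (hQ₀range : ∀ ω, Q₀ ω ∈ Set.Icc (0:ℝ) 1)
    (hQ₀orth : ∀ f : Ω → ℝ, Measurable[MeasurableSpace.comap W inferInstance] f →
      (∃ C : ℝ, ∀ ω, |f ω| ≤ C) →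
      ∫ ω, A ω * (Y ω - Q₀ ω) * f ω ∂P = 0)
    {J : ℕ} (T : 𝒲 → (Fin J → ℝ)) (hT : Measurable T)
    (QT : Ω → ℝ)
    (hQTmeas : Measurable[MeasurableSpace.comap (fun ω => T (W ω)) inferInstance] QT)
    (hQTrange : ∀ ω, QT ω ∈ Set.Icc (0:ℝ) 1)
    (hQTorth : ∀ f : Ω → ℝ,
      Measurable[MeasurableSpace.comap (fun ω => T (W ω)) inferInstance] f →
      (∃ C : ℝ, ∀ ω, |f ω| ≤ C) →
      ∫ ω, A ω * (Y ω - QT ω) * f ω ∂P = 0)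
    (H Hstar : Ω → ℝ)
    (hH : H =ᵐ[P] P[A|MeasurableSpace.comap QT inferInstance])
    (hHstar : Hstar =ᵐ[P]
      P[A|MeasurableSpace.comap (fun ω => (QT ω, Q₀ ω)) inferInstance])
    (hHpos : ∀ᵐ ω ∂P, δ ≤ H ω)
    (hHstarpos : ∀ᵐ ω ∂P, δ ≤ Hstar ω)
    (C : ℝ) (hC : 0 ≤ C)
    (g : ℝ × ℝ → ℝ) (hg : Measurable g)
    (hgver : Hstar =ᵐ[P] fun ω => g (QT ω, Q₀ ω))
    (hLip : ∀ x y y' : ℝ, |g (x, y) - g (x, y')| ≤ C * |y - y'|) :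
    |(∫ ω, QT ω ∂P) - (∫ ω, Q₀ ω ∂P)|
      ≤ C * (δ ^ 2)⁻¹ * ∫ ω, (QT ω - Q₀ ω) ^ 2 ∂P := by
  rename_i mΩ m𝒲 hPprob
  obtain ⟨hδ0, hδ1⟩ := hδ
  set mW := MeasurableSpace.comap W inferInstance with hmWdef
  set mT := MeasurableSpace.comap (fun ω => T (W ω)) inferInstance with hmTdef
  set m1 := MeasurableSpace.comap QT inferInstance with hm1def
  set m2 := MeasurableSpace.comap (fun ω => (QT ω, Q₀ ω)) inferInstance with hm2def
  -- σ-algebra relations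
  have hWmW : Measurable[mW] W := comap_measurable W
  have hTWmW : Measurable[mW] (fun ω => T (W ω)) := hT.comp hWmW
  have hmTW : mT ≤ mW := hTWmW.comap_le
  have hQTmW : Measurable[mW] QT := hQTmeas.mono hmTW le_rfl
  have hpairmW : Measurable[mW] (fun ω => (QT ω, Q₀ ω)) := hQTmW.prodMk hQ₀meas
  have hm2W : m2 ≤ mW := hpairmW.comap_le
  have hpairm2 : Measurable[m2] (fun ω => (QT ω, Q₀ ω)) := comap_measurable _
  have hQTm2 : Measurable[m2] QT := measurable_fst.comp hpairm2
  have hQ₀m2 : Measurable[m2] Q₀ := measurable_snd.comp hpairm2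
  have hm12 : m1 ≤ m2 := hQTm2.comap_le
  have hQTm1 : Measurable[m1] QT := comap_measurable QT
  have hm1T : m1 ≤ mT := hQTmeas.comap_le
  have hmW0 : mW ≤ mΩ := hW.comap_le
  have hm20 : m2 ≤ mΩ := hm2W.trans hmW0
  have hm10 : m1 ≤ mΩ := hm12.trans hm20
  haveI hsf2 : IsFiniteMeasure (P.trim hm20) := isFiniteMeasure_trim hm20
  haveI hsf1 : IsFiniteMeasure (P.trim hm10) := isFiniteMeasure_trim hm10
  have hQTm : Measurable[mΩ] QT := hQTm1.mono hm10 le_rfl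
  have hQ₀m : Measurable[mΩ] Q₀ := hQ₀meas.mono hmW0 le_rfl
  -- pointwise bounds
  have hAbd : ∀ ω, |A ω| ≤ 1 := fun ω => by rcases hAbin ω with h | h <;> simp [h]
  have hQ₀bd : ∀ ω, |Q₀ ω| ≤ 1 := fun ω =>
    abs_le.mpr ⟨by linarith [(hQ₀range ω).1], (hQ₀range ω).2⟩
  have hQTbd : ∀ ω, |QT ω| ≤ 1 := fun ω =>
    abs_le.mpr ⟨by linarith [(hQTrange ω).1], (hQTrange ω).2⟩
  -- integrability helper
  have hint : ∀ (u : Ω → ℝ) (M : ℝ), AEStronglyMeasurable[mΩ] u P →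
      (∀ᵐ ω ∂P, |u ω| ≤ M) → Integrable u P := by
    intro u M hu hbd
    exact Integrable.mono' (integrable_const M) hu
      (hbd.mono fun ω h => by simpa [Real.norm_eq_abs] using h)
  have tri : ∀ (a b c Ma Mb Mc : ℝ), |a| ≤ Ma → |b| ≤ Mb → |c| ≤ Mc →
      |a * b * c| ≤ Ma * Mb * Mc := by
    intro a b c Ma Mb Mc h1 h2 h3
    rw [abs_mul, abs_mul]
    exact mul_le_mul (mul_le_mul h1 h2 (abs_nonneg _) ((abs_nonneg _).trans h1)) h3
      (abs_nonneg _)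
      (mul_nonneg ((abs_nonneg a).trans h1) ((abs_nonneg b).trans h2))
  -- conditional expectation swap lemma
  have hswap : ∀ (m : MeasurableSpace Ω), m ≤ mΩ → ∀ (ψ φ : Ω → ℝ),
      Measurable[m] ψ → Integrable (fun ω => ψ ω * φ ω) P → Integrable φ P →
      ∫ ω, ψ ω * φ ω ∂P = ∫ ω, ψ ω * (P[φ|m]) ω ∂P := by
    intro m hm ψ φ hψ h1 h2
    haveI : IsFiniteMeasure (P.trim hm) := isFiniteMeasure_trim hm
    have h3 : P[fun ω => ψ ω * φ ω|m] =ᵐ[P] fun ω => ψ ω * (P[φ|m]) ω := by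
      have h4 := condExp_mul_of_stronglyMeasurable_left (μ := P) (m := m)
        (hψ.stronglyMeasurable) h1 h2
      filter_upwards [h4] with ω hω using hω
    have e1 : ∫ ω, (P[fun ω => ψ ω * φ ω|m]) ω ∂P = ∫ ω, ψ ω * φ ω ∂P :=
      integral_condExp hm
    rw [← e1]
    exact integral_congr_ae h3
  -- the clipped inverse propensity
  have hH₁m1 : Measurable[m1] (P[A|m1]) := stronglyMeasurable_condExp.measurable
  set f : Ω → ℝ := fun ω => (max ((P[A|m1]) ω) δ)⁻¹ with hfdef
  have hfm1 : Measurable[m1] f := (hH₁m1.max measurable_const).inv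
  have hfm : Measurable[mΩ] f := hfm1.mono hm10 le_rfl
  have hfbd : ∀ ω, |f ω| ≤ δ⁻¹ := by
    intro ω
    have h1 : (0:ℝ) < max ((P[A|m1]) ω) δ := lt_of_lt_of_le hδ0 (le_max_right _ _)
    rw [hfdef, abs_of_pos (inv_pos.mpr h1)]
    exact inv_anti₀ hδ0 (le_max_right _ _)
  have haeH₁ : ∀ᵐ ω ∂P, δ ≤ (P[A|m1]) ω := by
    filter_upwards [hH, hHpos] with ω h1 h2
    rw [← h1]; exact h2
  have haefH : ∀ᵐ ω ∂P, f ω * (P[A|m1]) ω = 1 := by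
    filter_upwards [haeH₁] with ω h
    rw [hfdef]
    simp only
    rw [max_eq_left h]
    exact inv_mul_cancel₀ (ne_of_gt (lt_of_lt_of_le hδ0 h))
  -- conditional expectation of A w.r.t. m2 lies in [0,1] and equals g(QT, Q₀) a.e.
  have intA : Integrable A P :=
    hint A 1 hA.aestronglyMeasurable (Filter.Eventually.of_forall hAbd)
  have haeHs1 : ∀ᵐ ω ∂P, (P[A|m2]) ω ≤ 1 := by
    have h1 : P[A|m2] ≤ᵐ[P] P[fun _ => (1:ℝ)|m2] :=
      condExp_mono intA (integrable_const 1)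
        (Filter.Eventually.of_forall fun ω => (abs_le.mp (hAbd ω)).2)
    have h2 : P[fun _ => (1:ℝ)|m2] = fun _ => (1:ℝ) := condExp_const hm20 1
    filter_upwards [h1] with ω h
    rw [h2] at h; exact h
  have haeHs0 : ∀ᵐ ω ∂P, 0 ≤ (P[A|m2]) ω :=
    condExp_nonneg (Filter.Eventually.of_forall fun ω => by
      rcases hAbin ω with h | h <;> simp [h])
  have haeHsg : ∀ᵐ ω ∂P, (P[A|m2]) ω = g (QT ω, Q₀ ω) := by
    filter_upwards [hHstar, hgver] with ω h1 h2
    rw [← h1]; exact h2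
  -- clipped conditional mean of Q₀ given m1
  set Qb : Ω → ℝ := fun ω => max 0 (min ((P[Q₀|m1]) ω) 1) with hQbdef
  have hQbm1 : Measurable[m1] Qb :=
    measurable_const.max (stronglyMeasurable_condExp.measurable.min measurable_const)
  have hQbm : Measurable[mΩ] Qb := hQbm1.mono hm10 le_rfl
  have hQbrange : ∀ ω, Qb ω ∈ Set.Icc (0:ℝ) 1 := fun ω =>
    ⟨le_max_left _ _, max_le zero_le_one (min_le_right _ _)⟩
  have hQbbd : ∀ ω, |Qb ω| ≤ 1 := fun ω =>
    abs_le.mpr ⟨by linarith [(hQbrange ω).1], (hQbrange ω).2⟩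
  have hDbd : ∀ ω, |Q₀ ω - Qb ω| ≤ 1 := fun ω =>
    abs_le.mpr ⟨by linarith [(hQ₀range ω).1, (hQbrange ω).2],
      by linarith [(hQ₀range ω).2, (hQbrange ω).1]⟩
  have intQ₀ : Integrable Q₀ P :=
    hint Q₀ 1 hQ₀m.aestronglyMeasurable (Filter.Eventually.of_forall hQ₀bd)
  have haeQb : Qb =ᵐ[P] P[Q₀|m1] := by
    have h0 : ∀ᵐ ω ∂P, 0 ≤ (P[Q₀|m1]) ω :=
      condExp_nonneg (Filter.Eventually.of_forall fun ω => (hQ₀range ω).1)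
    have h1 : ∀ᵐ ω ∂P, (P[Q₀|m1]) ω ≤ 1 := by
      have ha : P[Q₀|m1] ≤ᵐ[P] P[fun _ => (1:ℝ)|m1] :=
        condExp_mono intQ₀ (integrable_const 1)
          (Filter.Eventually.of_forall fun ω => (hQ₀range ω).2)
      have hb : P[fun _ => (1:ℝ)|m1] = fun _ => (1:ℝ) := condExp_const hm10 1
      filter_upwards [ha] with ω h; rw [hb] at h; exact h
    filter_upwards [h0, h1] with ω h0' h1'
    rw [hQbdef]
    simp only
    rw [min_eq_left h1', max_eq_right h0']
  -- Step I : ∫ A (Q₀ - QT) f = 0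
  have hI : ∫ ω, A ω * (Q₀ ω - QT ω) * f ω ∂P = 0 := by
    have h1 := hQTorth f (hfm1.mono hm1T le_rfl) ⟨δ⁻¹, hfbd⟩
    have h2 := hQ₀orth f (hfm1.mono (hm1T.trans hmTW) le_rfl) ⟨δ⁻¹, hfbd⟩
    have int1 : Integrable (fun ω => A ω * (Y ω - QT ω) * f ω) P := by
      refine hint _ (1 * 2 * δ⁻¹)
        (((hA.mul (hY.sub hQTm)).mul hfm).aestronglyMeasurable)
        (Filter.Eventually.of_forall fun ω => ?_)
      exact tri _ _ _ _ _ _ (hAbd ω)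
        (abs_le.mpr ⟨by linarith [(hYrange ω).1, (hQTrange ω).2],
          by linarith [(hYrange ω).2, (hQTrange ω).1]⟩) (hfbd ω)
    have int2 : Integrable (fun ω => A ω * (Y ω - Q₀ ω) * f ω) P := by
      refine hint _ (1 * 2 * δ⁻¹)
        (((hA.mul (hY.sub hQ₀m)).mul hfm).aestronglyMeasurable)
        (Filter.Eventually.of_forall fun ω => ?_)
      exact tri _ _ _ _ _ _ (hAbd ω)
        (abs_le.mpr ⟨by linarith [(hYrange ω).1, (hQ₀range ω).2],
          by linarith [(hYrange ω).2, (hQ₀range ω).1]⟩) (hfbd ω)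
    have h3 : ∫ ω, A ω * (Q₀ ω - QT ω) * f ω ∂P
        = (∫ ω, A ω * (Y ω - QT ω) * f ω ∂P) - ∫ ω, A ω * (Y ω - Q₀ ω) * f ω ∂P := by
      rw [← integral_sub int1 int2]
      exact integral_congr_ae (Filter.Eventually.of_forall fun ω => by ring)
    rw [h3, h1, h2, sub_zero]
  -- generic integrability for (bounded) · f · A
  have intbf : ∀ (u : Ω → ℝ) (Mu : ℝ), Measurable[mΩ] u → (∀ ω, |u ω| ≤ Mu) →
      Integrable (fun ω => u ω * f ω * A ω) P := by
    intro u Mu hu hub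
    exact hint _ (Mu * δ⁻¹ * 1) (((hu.mul hfm).mul hA).aestronglyMeasurable)
      (Filter.Eventually.of_forall fun ω => tri _ _ _ _ _ _ (hub ω) (hfbd ω) (hAbd ω))
  -- Step II : ∫ QT f A = ∫ QT and ∫ Q₀ f A = ∫ QT
  have hAQTf : ∫ ω, QT ω * f ω * A ω ∂P = ∫ ω, QT ω ∂P := by
    have hs := hswap m1 hm10 (fun ω => QT ω * f ω) A (hQTm1.mul hfm1)
      (by simpa using intbf QT 1 hQTm hQTbd) intA
    calc ∫ ω, QT ω * f ω * A ω ∂P = ∫ ω, QT ω * f ω * (P[A|m1]) ω ∂P := hs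
      _ = ∫ ω, QT ω ∂P := by
          refine integral_congr_ae ?_
          filter_upwards [haefH] with ω h
          calc QT ω * f ω * (P[A|m1]) ω = QT ω * (f ω * (P[A|m1]) ω) := by ring
            _ = QT ω := by rw [h, mul_one]
  have hII : ∫ ω, Q₀ ω * f ω * A ω ∂P = ∫ ω, QT ω ∂P := by
    have h1 : ∫ ω, Q₀ ω * f ω * A ω ∂P - ∫ ω, QT ω * f ω * A ω ∂P = 0 := by
      rw [← integral_sub (intbf Q₀ 1 hQ₀m hQ₀bd) (intbf QT 1 hQTm hQTbd), ← hI]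
      exact integral_congr_ae (Filter.Eventually.of_forall fun ω => by ring)
    rw [sub_eq_zero.mp h1, hAQTf]
  -- Step III : ∫ Qb f A = ∫ Q₀
  have hIII : ∫ ω, Qb ω * f ω * A ω ∂P = ∫ ω, Q₀ ω ∂P := by
    have hs := hswap m1 hm10 (fun ω => Qb ω * f ω) A (hQbm1.mul hfm1)
      (by simpa using intbf Qb 1 hQbm hQbbd) intA
    calc ∫ ω, Qb ω * f ω * A ω ∂P = ∫ ω, Qb ω * f ω * (P[A|m1]) ω ∂P := hs
      _ = ∫ ω, Qb ω ∂P := by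
          refine integral_congr_ae ?_
          filter_upwards [haefH] with ω h
          calc Qb ω * f ω * (P[A|m1]) ω = Qb ω * (f ω * (P[A|m1]) ω) := by ring
            _ = Qb ω := by rw [h, mul_one]
      _ = ∫ ω, (P[Q₀|m1]) ω ∂P := integral_congr_ae haeQb
      _ = ∫ ω, Q₀ ω ∂P := integral_condExp hm10
  -- orthogonality of Q₀ - Qb to bounded m1-measurable functions
  have horth : ∀ (ψ : Ω → ℝ) (M : ℝ), Measurable[m1] ψ → (∀ᵐ ω ∂P, |ψ ω| ≤ M) →
      ∫ ω, ψ ω * (Q₀ ω - Qb ω) ∂P = 0 := by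
    intro ψ M hψ hbd
    have hψm : Measurable[mΩ] ψ := hψ.mono hm10 le_rfl
    have int1 : Integrable (fun ω => ψ ω * Q₀ ω) P := by
      refine hint _ (M * 1) ((hψm.mul hQ₀m).aestronglyMeasurable) ?_
      filter_upwards [hbd] with ω h
      rw [abs_mul]
      exact mul_le_mul h (hQ₀bd ω) (abs_nonneg _) ((abs_nonneg _).trans h)
    have int2 : Integrable (fun ω => ψ ω * Qb ω) P := by
      refine hint _ (M * 1) ((hψm.mul hQbm).aestronglyMeasurable) ?_
      filter_upwards [hbd] with ω h
      rw [abs_mul]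
      exact mul_le_mul h (hQbbd ω) (abs_nonneg _) ((abs_nonneg _).trans h)
    have h1 : ∫ ω, ψ ω * (Q₀ ω - Qb ω) ∂P
        = (∫ ω, ψ ω * Q₀ ω ∂P) - ∫ ω, ψ ω * Qb ω ∂P := by
      rw [← integral_sub int1 int2]
      exact integral_congr_ae (Filter.Eventually.of_forall fun ω => by ring)
    have h2 : ∫ ω, ψ ω * Q₀ ω ∂P = ∫ ω, ψ ω * (P[Q₀|m1]) ω ∂P :=
      hswap m1 hm10 ψ Q₀ hψ int1 intQ₀
    have h3 : ∫ ω, ψ ω * Qb ω ∂P = ∫ ω, ψ ω * (P[Q₀|m1]) ω ∂P := by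
      refine integral_congr_ae ?_
      filter_upwards [haeQb] with ω h
      rw [h]
    rw [h1, h2, h3, sub_self]
  -- Step V : ∫ (Q₀ - Qb) f A = ∫ QT - ∫ Q₀, then condition A on m2
  have hV : ∫ ω, (Q₀ ω - Qb ω) * f ω * A ω ∂P
      = (∫ ω, QT ω ∂P) - ∫ ω, Q₀ ω ∂P := by
    have h1 : ∫ ω, (Q₀ ω - Qb ω) * f ω * A ω ∂P
        = (∫ ω, Q₀ ω * f ω * A ω ∂P) - ∫ ω, Qb ω * f ω * A ω ∂P := by
      rw [← integral_sub (intbf Q₀ 1 hQ₀m hQ₀bd) (intbf Qb 1 hQbm hQbbd)]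
      exact integral_congr_ae (Filter.Eventually.of_forall fun ω => by ring)
    rw [h1, hII, hIII]
  have hV' : ∫ ω, (Q₀ ω - Qb ω) * f ω * (P[A|m2]) ω ∂P
      = (∫ ω, QT ω ∂P) - ∫ ω, Q₀ ω ∂P := by
    have hψ : Measurable[m2] (fun ω => (Q₀ ω - Qb ω) * f ω) :=
      (hQ₀m2.sub (hQbm1.mono hm12 le_rfl)).mul (hfm1.mono hm12 le_rfl)
    have hint1 : Integrable (fun ω => (Q₀ ω - Qb ω) * f ω * A ω) P :=
      intbf (fun ω => Q₀ ω - Qb ω) 1 (hQ₀m.sub hQbm) hDbd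
    have hs := hswap m2 hm20 (fun ω => (Q₀ ω - Qb ω) * f ω) A hψ
      (by simpa using hint1) intA
    rw [← hs]
    exact hV
  -- a.e. bound on g (QT, Qb)
  have hgQbbd : ∀ᵐ ω ∂P, |g (QT ω, Qb ω)| ≤ 1 + C := by
    filter_upwards [haeHsg, haeHs0, haeHs1] with ω h1 h2 h3
    have h4 : |g (QT ω, Q₀ ω) - g (QT ω, Qb ω)| ≤ C * |Q₀ ω - Qb ω| := hLip _ _ _
    have h6 : |g (QT ω, Q₀ ω)| ≤ 1 := by
      rw [← h1]; exact abs_le.mpr ⟨by linarith, h3⟩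
    have h7 : C * |Q₀ ω - Qb ω| ≤ C := by
      calc C * |Q₀ ω - Qb ω| ≤ C * 1 := mul_le_mul_of_nonneg_left (hDbd ω) hC
        _ = C := mul_one C
    calc |g (QT ω, Qb ω)|
        = |g (QT ω, Q₀ ω) - (g (QT ω, Q₀ ω) - g (QT ω, Qb ω))| := by ring_nf
      _ ≤ |g (QT ω, Q₀ ω)| + |g (QT ω, Q₀ ω) - g (QT ω, Qb ω)| := abs_sub _ _
      _ ≤ 1 + C := add_le_add h6 (h4.trans h7)
  -- Step IV : ∫ (g(QT,Qb) f) (Q₀ - Qb) = 0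
  have hIV : ∫ ω, g (QT ω, Qb ω) * f ω * (Q₀ ω - Qb ω) ∂P = 0 := by
    refine horth (fun ω => g (QT ω, Qb ω) * f ω) ((1 + C) * δ⁻¹)
      ((hg.comp (hQTm1.prodMk hQbm1)).mul hfm1) ?_
    filter_upwards [hgQbbd] with ω h1
    rw [abs_mul]
    exact mul_le_mul h1 (hfbd ω) (abs_nonneg _) (by linarith)
  -- Step VI : the bias identity
  have intV' : Integrable (fun ω => (Q₀ ω - Qb ω) * f ω * (P[A|m2]) ω) P := by
    refine hint _ (1 * δ⁻¹ * 1)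
      ((((hQ₀m.sub hQbm).mul hfm).mul
        ((stronglyMeasurable_condExp (m := m2)).measurable.mono hm20
          le_rfl)).aestronglyMeasurable) ?_
    filter_upwards [haeHs0, haeHs1] with ω h2 h3
    exact tri _ _ _ _ _ _ (hDbd ω) (hfbd ω) (abs_le.mpr ⟨by linarith, h3⟩)
  have intIV : Integrable (fun ω => g (QT ω, Qb ω) * f ω * (Q₀ ω - Qb ω)) P := by
    refine hint _ ((1 + C) * δ⁻¹ * 1)
      ((((hg.comp (hQTm.prodMk hQbm)).mul hfm).mul
        (hQ₀m.sub hQbm)).aestronglyMeasurable) ?_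
    filter_upwards [hgQbbd] with ω h1
    exact tri _ _ _ _ _ _ h1 (hfbd ω) (hDbd ω)
  have hVI : (∫ ω, QT ω ∂P) - ∫ ω, Q₀ ω ∂P
      = ∫ ω, (Q₀ ω - Qb ω) * ((P[A|m2]) ω - g (QT ω, Qb ω)) * f ω ∂P := by
    have h1 : ∫ ω, (Q₀ ω - Qb ω) * ((P[A|m2]) ω - g (QT ω, Qb ω)) * f ω ∂P
        = (∫ ω, (Q₀ ω - Qb ω) * f ω * (P[A|m2]) ω ∂P)
          - ∫ ω, g (QT ω, Qb ω) * f ω * (Q₀ ω - Qb ω) ∂P := by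
      rw [← integral_sub intV' intIV]
      exact integral_congr_ae (Filter.Eventually.of_forall fun ω => by ring)
    rw [h1, hV', hIV, sub_zero]
  -- Step VII : bound the bias by C δ⁻¹ ∫ (Q₀ - Qb)²
  have haeB : ∀ᵐ ω ∂P, |(Q₀ ω - Qb ω) * ((P[A|m2]) ω - g (QT ω, Qb ω)) * f ω|
      ≤ C * δ⁻¹ * (Q₀ ω - Qb ω) ^ 2 := by
    filter_upwards [haeHsg] with ω h1
    have hb : |(P[A|m2]) ω - g (QT ω, Qb ω)| ≤ C * |Q₀ ω - Qb ω| := by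
      rw [h1]; exact hLip _ _ _
    have ha : (0:ℝ) ≤ |Q₀ ω - Qb ω| := abs_nonneg _
    calc |(Q₀ ω - Qb ω) * ((P[A|m2]) ω - g (QT ω, Qb ω)) * f ω|
        ≤ |Q₀ ω - Qb ω| * (C * |Q₀ ω - Qb ω|) * δ⁻¹ :=
          tri _ _ _ _ _ _ le_rfl hb (hfbd ω)
      _ = C * δ⁻¹ * |Q₀ ω - Qb ω| ^ 2 := by ring
      _ = C * δ⁻¹ * (Q₀ ω - Qb ω) ^ 2 := by rw [sq_abs]
  have intsq : Integrable (fun ω => (Q₀ ω - Qb ω) ^ 2) P := by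
    refine hint _ 1 (((hQ₀m.sub hQbm).pow_const 2).aestronglyMeasurable)
      (Filter.Eventually.of_forall fun ω => ?_)
    have h5 := abs_le.mp (hDbd ω)
    rw [abs_of_nonneg (sq_nonneg _)]
    nlinarith [h5.1, h5.2]
  have intu : Integrable
      (fun ω => (Q₀ ω - Qb ω) * ((P[A|m2]) ω - g (QT ω, Qb ω)) * f ω) P := by
    refine hint _ (C * δ⁻¹ * 1)
      ((((hQ₀m.sub hQbm).mul
        (((stronglyMeasurable_condExp (m := m2)).measurable.mono hm20 le_rfl).sub
          (hg.comp (hQTm.prodMk hQbm)))).mul hfm).aestronglyMeasurable) ?_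
    filter_upwards [haeB] with ω h
    refine h.trans ?_
    have h5 := abs_le.mp (hDbd ω)
    have : (Q₀ ω - Qb ω) ^ 2 ≤ 1 := by nlinarith [h5.1, h5.2]
    exact mul_le_mul_of_nonneg_left this (by positivity)
  have hVII : |(∫ ω, QT ω ∂P) - ∫ ω, Q₀ ω ∂P|
      ≤ C * δ⁻¹ * ∫ ω, (Q₀ ω - Qb ω) ^ 2 ∂P := by
    rw [hVI]
    have h1 : |∫ ω, (Q₀ ω - Qb ω) * ((P[A|m2]) ω - g (QT ω, Qb ω)) * f ω ∂P|
        ≤ ∫ ω, |(Q₀ ω - Qb ω) * ((P[A|m2]) ω - g (QT ω, Qb ω)) * f ω| ∂P := by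
      have := norm_integral_le_integral_norm (μ := P)
        (f := fun ω => (Q₀ ω - Qb ω) * ((P[A|m2]) ω - g (QT ω, Qb ω)) * f ω)
      simp only [Real.norm_eq_abs] at this
      exact this
    refine h1.trans ?_
    have h2 : ∫ ω, |(Q₀ ω - Qb ω) * ((P[A|m2]) ω - g (QT ω, Qb ω)) * f ω| ∂P
        ≤ ∫ ω, C * δ⁻¹ * (Q₀ ω - Qb ω) ^ 2 ∂P :=
      integral_mono_ae intu.abs (intsq.const_mul _) haeB
    refine h2.trans_eq ?_
    exact integral_const_mul _ _
  -- Step VIII : ∫ (Q₀ - Qb)² ≤ ∫ (QT - Q₀)²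
  have intsq2 : Integrable (fun ω => (QT ω - Q₀ ω) ^ 2) P := by
    refine hint _ 1 (((hQTm.sub hQ₀m).pow_const 2).aestronglyMeasurable)
      (Filter.Eventually.of_forall fun ω => ?_)
    have h5 : |QT ω - Q₀ ω| ≤ 1 :=
      abs_le.mpr ⟨by linarith [(hQTrange ω).1, (hQ₀range ω).2],
        by linarith [(hQTrange ω).2, (hQ₀range ω).1]⟩
    have h6 := abs_le.mp h5
    rw [abs_of_nonneg (sq_nonneg _)]
    nlinarith [h6.1, h6.2]
  have intsq3 : Integrable (fun ω => (Qb ω - QT ω) ^ 2) P := by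
    refine hint _ 1 (((hQbm.sub hQTm).pow_const 2).aestronglyMeasurable)
      (Filter.Eventually.of_forall fun ω => ?_)
    have h5 : |Qb ω - QT ω| ≤ 1 :=
      abs_le.mpr ⟨by linarith [(hQbrange ω).1, (hQTrange ω).2],
        by linarith [(hQbrange ω).2, (hQTrange ω).1]⟩
    have h6 := abs_le.mp h5
    rw [abs_of_nonneg (sq_nonneg _)]
    nlinarith [h6.1, h6.2]
  have intcross : Integrable (fun ω => 2 * (Qb ω - QT ω) * (Q₀ ω - Qb ω)) P := by
    refine hint _ (2 * 1 * 1)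
      (((measurable_const.mul (hQbm.sub hQTm)).mul
        (hQ₀m.sub hQbm)).aestronglyMeasurable)
      (Filter.Eventually.of_forall fun ω => ?_)
    refine tri _ _ _ _ _ _ (by norm_num) ?_ (hDbd ω)
    exact abs_le.mpr ⟨by linarith [(hQbrange ω).1, (hQTrange ω).2],
      by linarith [(hQbrange ω).2, (hQTrange ω).1]⟩
  have hcross : ∫ ω, 2 * (Qb ω - QT ω) * (Q₀ ω - Qb ω) ∂P = 0 :=
    horth (fun ω => 2 * (Qb ω - QT ω)) 2
      (measurable_const.mul (hQbm1.sub hQTm1))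
      (Filter.Eventually.of_forall fun ω => by
        rw [abs_mul]
        have h5 : |Qb ω - QT ω| ≤ 1 :=
          abs_le.mpr ⟨by linarith [(hQbrange ω).1, (hQTrange ω).2],
            by linarith [(hQbrange ω).2, (hQTrange ω).1]⟩
        calc |(2:ℝ)| * |Qb ω - QT ω| ≤ 2 * 1 := by
              rw [abs_two]
              exact mul_le_mul_of_nonneg_left h5 (by norm_num)
          _ = 2 := mul_one 2)
  have hVIII : ∫ ω, (Q₀ ω - Qb ω) ^ 2 ∂P ≤ ∫ ω, (QT ω - Q₀ ω) ^ 2 ∂P := by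
    have hexp : ∫ ω, (QT ω - Q₀ ω) ^ 2 ∂P
        = (∫ ω, (Q₀ ω - Qb ω) ^ 2 ∂P) + (∫ ω, (Qb ω - QT ω) ^ 2 ∂P)
          + ∫ ω, 2 * (Qb ω - QT ω) * (Q₀ ω - Qb ω) ∂P := by
      have e : ∫ ω, (QT ω - Q₀ ω) ^ 2 ∂P
          = ∫ ω, ((Q₀ ω - Qb ω) ^ 2 + (Qb ω - QT ω) ^ 2)
              + 2 * (Qb ω - QT ω) * (Q₀ ω - Qb ω) ∂P :=
        integral_congr_ae (Filter.Eventually.of_forall fun ω => by ring)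
      have i12 : Integrable (fun ω => (Q₀ ω - Qb ω) ^ 2 + (Qb ω - QT ω) ^ 2) P :=
        intsq.add intsq3
      rw [e, integral_add i12 intcross, integral_add intsq intsq3]
    have h1 : 0 ≤ ∫ ω, (Qb ω - QT ω) ^ 2 ∂P :=
      integral_nonneg fun ω => sq_nonneg _
    rw [hexp, hcross, add_zero]
    linarith
  -- conclusion
  have hsq0 : 0 ≤ ∫ ω, (Q₀ ω - Qb ω) ^ 2 ∂P := integral_nonneg fun ω => sq_nonneg _
  have hinv : δ⁻¹ ≤ (δ ^ 2)⁻¹ := by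
    apply inv_anti₀ (by positivity)
    nlinarith
  calc |(∫ ω, QT ω ∂P) - ∫ ω, Q₀ ω ∂P|
      ≤ C * δ⁻¹ * ∫ ω, (Q₀ ω - Qb ω) ^ 2 ∂P := hVII
    _ ≤ C * (δ ^ 2)⁻¹ * ∫ ω, (Q₀ ω - Qb ω) ^ 2 ∂P :=
        mul_le_mul_of_nonneg_right (mul_le_mul_of_nonneg_left hinv hC) hsq0
    _ ≤ C * (δ ^ 2)⁻¹ * ∫ ω, (QT ω - Q₀ ω) ^ 2 ∂P :=
        mul_le_mul_of_nonneg_left hVIII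
          (mul_nonneg hC (by positivity))
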